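/- Let 1 < p ≤ 2, let Λ∞ ≥ 0, and let x ↦ M(x) be a measurable family of symmetric linear maps on ℝ^N with |M(x) ξ| ≤ Λ∞ |ξ| for all ξ ∈ ℝ^N and μ-almost every x ∈ Ω. Then for any p-integrable vector fields f, g on Ω, ‖|g|^{p−2} M g − |f|^{p−2} M f‖_{p'} ≤ Λ∞ · ((3 − p)/(p − 1)) · 2^{p−1} · ‖g − f‖_p^{p−1}, where (|g|^{p−2} M g)(x) = |g(x)|^{p−2} M(x) g(x). -/

import Mathlib

open MeasureTheory

lemma two_rpow_le_one_add {t : ℝ} (h0 : 0 ≤ t) (h1 : t ≤ 1) : (2:ℝ) ^ t ≤ 1 + t := by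
  have h2 : (2:ℝ) ^ t = Real.exp (t * Real.log 2) := by
    rw [Real.rpow_def_of_pos (by norm_num), mul_comm]
  rw [h2]
  have := convexOn_exp.2 (Set.mem_univ (0:ℝ)) (Set.mem_univ (Real.log 2))
    (by linarith : (0:ℝ) ≤ 1 - t) h0 (by ring)
  simp only [smul_eq_mul, mul_zero, zero_add, Real.exp_zero,
    Real.exp_log (by norm_num : (0:ℝ) < 2)] at this
  linarith

lemma rpow_sub_two_mul_self {p : ℝ} (hp1 : 1 < p) {s : ℝ} (hs : 0 ≤ s) :
    s ^ (p - 2) * s = s ^ (p - 1) := by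
  rcases hs.eq_or_lt with h | h
  · rw [← h, mul_zero, Real.zero_rpow (by intro hc; linarith : p - 1 ≠ 0)]
  · nth_rewrite 2 [← Real.rpow_one s]
    rw [← Real.rpow_add h]
    ring_nf

lemma scalar_ineq {p : ℝ} (hp1 : 1 < p) (hp2 : p ≤ 2) {s t : ℝ} (hs : 0 < s) (hst : s ≤ t) :
    s * (s ^ (p - 2) - t ^ (p - 2)) ≤ (2 - p) / (p - 1) * (t - s) ^ (p - 1) := by
  rcases eq_or_lt_of_le hp2 with hp2' | hp2'
  · rw [hp2']
    norm_num
  have ht : 0 < t := lt_of_lt_of_le hs hst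
  have hpne : p - 2 ≠ 0 := by intro hc; linarith
  have key1 : ∫ u in s..t, u ^ (p - 3) = (t ^ (p - 2) - s ^ (p - 2)) / (p - 2) := by
    rw [integral_rpow (Or.inr ⟨by intro hc; linarith, by
      rw [Set.mem_uIcc]; push_neg; constructor <;> intro h <;> linarith⟩)]
    rw [show p - 3 + 1 = p - 2 by ring]
  have key2 : s * (s ^ (p - 2) - t ^ (p - 2)) = (2 - p) * ∫ u in s..t, s * u ^ (p - 3) := by
    rw [intervalIntegral.integral_const_mul, key1]
    field_simp
    ring
  have key3 : ∫ u in s..t, (u - s) ^ (p - 2) = (t - s) ^ (p - 1) / (p - 1) := by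
    rw [intervalIntegral.integral_comp_sub_right (fun u => u ^ (p - 2)) s, sub_self,
      integral_rpow (Or.inl (by linarith))]
    rw [Real.zero_rpow (by intro hc; linarith : p - 2 + 1 ≠ 0)]
    have : p - 2 + 1 = p - 1 := by ring
    rw [this]
    ring
  have mono : ∫ u in s..t, s * u ^ (p - 3) ≤ ∫ u in s..t, (u - s) ^ (p - 2) := by
    rw [intervalIntegral.integral_of_le hst, intervalIntegral.integral_of_le hst]
    apply setIntegral_mono_on
    · refine (ContinuousOn.integrableOn_Icc ?_).mono_set Set.Ioc_subset_Icc_self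
      exact continuousOn_const.mul (fun u hu =>
        (Real.continuousAt_rpow_const u (p - 3) (Or.inl (by
          have := hu.1; intro hc; rw [hc] at this; linarith))).continuousWithinAt)
    · have h1 : IntervalIntegrable (fun u : ℝ => u ^ (p - 2)) volume 0 (t - s) :=
        intervalIntegral.intervalIntegrable_rpow' (by linarith)
      have h2 := h1.comp_sub_right s
      simp only [zero_add, sub_add_cancel] at h2
      exact (intervalIntegrable_iff_integrableOn_Ioc_of_le hst).mp h2
    · exact measurableSet_Ioc
    · intro u hu
      have hu1 : s < u := hu.1
      have hu0 : 0 < u := lt_trans hs hu1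
      have e1 : s * u ^ (p - 3) ≤ u ^ (p - 2) := by
        rw [show p - 2 = 1 + (p - 3) by ring, Real.rpow_add hu0, Real.rpow_one]
        exact mul_le_mul_of_nonneg_right hu1.le (Real.rpow_nonneg hu0.le _)
      have e2 : u ^ (p - 2) ≤ (u - s) ^ (p - 2) :=
        Real.rpow_le_rpow_of_nonpos (by linarith) (by linarith) (by linarith)
      exact e1.trans e2
  calc s * (s ^ (p - 2) - t ^ (p - 2)) = (2 - p) * ∫ u in s..t, s * u ^ (p - 3) := key2
    _ ≤ (2 - p) * ∫ u in s..t, (u - s) ^ (p - 2) :=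
        mul_le_mul_of_nonneg_left mono (by linarith)
    _ = (2 - p) / (p - 1) * (t - s) ^ (p - 1) := by rw [key3]; ring

lemma key_aux {p : ℝ} (hp1 : 1 < p) (hp2 : p ≤ 2) {E : Type*} [NormedAddCommGroup E]
    [NormedSpace ℝ E] (a b : E) (hab : ‖a‖ ≤ ‖b‖) :
    ‖‖b‖ ^ (p - 2) • b - ‖a‖ ^ (p - 2) • a‖
      ≤ (3 - p) / (p - 1) * 2 ^ (p - 1) * ‖b - a‖ ^ (p - 1) := by
  have hp1' : 0 < p - 1 := by linarith
  have h2p : (0:ℝ) ≤ 2 ^ (p - 1) := Real.rpow_nonneg (by norm_num) _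
  have h2p1 : (1:ℝ) ≤ 2 ^ (p - 1) := by
    calc (1:ℝ) = 2 ^ (0:ℝ) := by norm_num
      _ ≤ 2 ^ (p - 1) := Real.rpow_le_rpow_of_exponent_le one_le_two (by linarith)
  have hC1 : 1 / (p - 1) ≤ (3 - p) / (p - 1) * 2 ^ (p - 1) := by
    have h1 : 1 / (p - 1) ≤ (3 - p) / (p - 1) := by gcongr <;> linarith
    have h2 : (0:ℝ) ≤ (3 - p) / (p - 1) := div_nonneg (by linarith) (by linarith)
    exact h1.trans (le_mul_of_one_le_right h2 h2p1)
  have hC2 : (2:ℝ) ≤ (3 - p) / (p - 1) * 2 ^ (p - 1) := by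
    have h1 : (2:ℝ) ^ (2 - p) ≤ 3 - p := by
      have := two_rpow_le_one_add (t := 2 - p) (by linarith) (by linarith)
      linarith
    have h2 : (2:ℝ) ^ (p - 1) * (2:ℝ) ^ (2 - p) = 2 := by
      rw [← Real.rpow_add (by norm_num : (0:ℝ) < 2)]
      norm_num
    have h3 : 3 - p ≤ (3 - p) / (p - 1) := by
      rw [le_div_iff₀ hp1']
      nlinarith
    calc (2:ℝ) = 2 ^ (p - 1) * 2 ^ (2 - p) := h2.symm
      _ ≤ 2 ^ (p - 1) * (3 - p) := mul_le_mul_of_nonneg_left h1 h2p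
      _ ≤ 2 ^ (p - 1) * ((3 - p) / (p - 1)) := mul_le_mul_of_nonneg_left h3 h2p
      _ = (3 - p) / (p - 1) * 2 ^ (p - 1) := by ring
  set C := (3 - p) / (p - 1) * 2 ^ (p - 1) with hCdef
  by_cases hb0 : b = 0
  · have ha0 : a = 0 := by
      rw [hb0, norm_zero] at hab
      exact norm_le_zero_iff.mp hab
    rw [hb0, ha0]
    simp only [smul_zero, sub_zero, sub_self, norm_zero]
    rw [Real.zero_rpow (show p - 1 ≠ 0 by intro h; linarith), mul_zero]
  · have hb : 0 < ‖b‖ := norm_pos_iff.mpr hb0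
    have hba : ‖b‖ - ‖a‖ ≤ ‖b - a‖ := norm_sub_norm_le b a
    have hd0 : (0:ℝ) ≤ ‖b - a‖ := norm_nonneg _
    rcases le_or_gt ‖b - a‖ ‖b‖ with hcase | hcase
    · have decomp : ‖b‖ ^ (p - 2) • b - ‖a‖ ^ (p - 2) • a
          = ‖b‖ ^ (p - 2) • (b - a) + (‖b‖ ^ (p - 2) - ‖a‖ ^ (p - 2)) • a := by
        rw [smul_sub, sub_smul]; abel
      have hT1 : ‖b‖ ^ (p - 2) * ‖b - a‖ ≤ ‖b - a‖ ^ (p - 1) := by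
        rcases hd0.eq_or_lt with h | h
        · rw [← h, mul_zero]
          exact Real.rpow_nonneg le_rfl _
        · have h5 := Real.rpow_le_rpow_of_nonpos h hcase (by linarith : p - 2 ≤ 0)
          calc ‖b‖ ^ (p - 2) * ‖b - a‖ ≤ ‖b - a‖ ^ (p - 2) * ‖b - a‖ :=
                mul_le_mul_of_nonneg_right h5 hd0
            _ = ‖b - a‖ ^ (p - 1) := rpow_sub_two_mul_self hp1 hd0
      have hT2 : |‖b‖ ^ (p - 2) - ‖a‖ ^ (p - 2)| * ‖a‖
          ≤ (2 - p) / (p - 1) * ‖b - a‖ ^ (p - 1) := by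
        rcases (norm_nonneg a).eq_or_lt with ha | ha
        · rw [← ha, mul_zero]
          exact mul_nonneg (div_nonneg (by linarith) (by linarith)) (Real.rpow_nonneg hd0 _)
        · have hs := Real.rpow_le_rpow_of_nonpos ha hab (by linarith : p - 2 ≤ 0)
          rw [abs_of_nonpos (by linarith : ‖b‖ ^ (p - 2) - ‖a‖ ^ (p - 2) ≤ 0)]
          calc -(‖b‖ ^ (p - 2) - ‖a‖ ^ (p - 2)) * ‖a‖
              = ‖a‖ * (‖a‖ ^ (p - 2) - ‖b‖ ^ (p - 2)) := by ring
            _ ≤ (2 - p) / (p - 1) * (‖b‖ - ‖a‖) ^ (p - 1) := scalar_ineq hp1 hp2 ha hab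
            _ ≤ (2 - p) / (p - 1) * ‖b - a‖ ^ (p - 1) := by
                apply mul_le_mul_of_nonneg_left _ (div_nonneg (by linarith) (by linarith))
                exact Real.rpow_le_rpow (by linarith) hba (by linarith)
      calc ‖‖b‖ ^ (p - 2) • b - ‖a‖ ^ (p - 2) • a‖
          ≤ ‖‖b‖ ^ (p - 2) • (b - a)‖ + ‖(‖b‖ ^ (p - 2) - ‖a‖ ^ (p - 2)) • a‖ := by
            rw [decomp]; exact norm_add_le _ _
        _ = ‖b‖ ^ (p - 2) * ‖b - a‖ + |‖b‖ ^ (p - 2) - ‖a‖ ^ (p - 2)| * ‖a‖ := by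
            rw [norm_smul, norm_smul, Real.norm_eq_abs, Real.norm_eq_abs,
              abs_of_nonneg (Real.rpow_nonneg (norm_nonneg b) _)]
        _ ≤ ‖b - a‖ ^ (p - 1) + (2 - p) / (p - 1) * ‖b - a‖ ^ (p - 1) := add_le_add hT1 hT2
        _ = 1 / (p - 1) * ‖b - a‖ ^ (p - 1) := by field_simp; ring
        _ ≤ C * ‖b - a‖ ^ (p - 1) :=
            mul_le_mul_of_nonneg_right hC1 (Real.rpow_nonneg hd0 _)
    · have h1 : ‖b‖ ^ (p - 1) ≤ ‖b - a‖ ^ (p - 1) :=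
        Real.rpow_le_rpow hb.le hcase.le (by linarith)
      have h2 : ‖a‖ ^ (p - 1) ≤ ‖b - a‖ ^ (p - 1) :=
        Real.rpow_le_rpow (norm_nonneg a) (hab.trans hcase.le) (by linarith)
      calc ‖‖b‖ ^ (p - 2) • b - ‖a‖ ^ (p - 2) • a‖
          ≤ ‖‖b‖ ^ (p - 2) • b‖ + ‖‖a‖ ^ (p - 2) • a‖ := norm_sub_le _ _
        _ = ‖b‖ ^ (p - 2) * ‖b‖ + ‖a‖ ^ (p - 2) * ‖a‖ := by
            rw [norm_smul, norm_smul, Real.norm_eq_abs, Real.norm_eq_abs,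
              abs_of_nonneg (Real.rpow_nonneg (norm_nonneg b) _),
              abs_of_nonneg (Real.rpow_nonneg (norm_nonneg a) _)]
        _ = ‖b‖ ^ (p - 1) + ‖a‖ ^ (p - 1) := by
            rw [rpow_sub_two_mul_self hp1 (norm_nonneg b),
              rpow_sub_two_mul_self hp1 (norm_nonneg a)]
        _ ≤ 2 * ‖b - a‖ ^ (p - 1) := by linarith
        _ ≤ C * ‖b - a‖ ^ (p - 1) :=
            mul_le_mul_of_nonneg_right hC2 (Real.rpow_nonneg (norm_nonneg _) _)

lemma key_ineq {p : ℝ} (hp1 : 1 < p) (hp2 : p ≤ 2) {E : Type*} [NormedAddCommGroup E]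
    [NormedSpace ℝ E] (a b : E) :
    ‖‖b‖ ^ (p - 2) • b - ‖a‖ ^ (p - 2) • a‖
      ≤ (3 - p) / (p - 1) * 2 ^ (p - 1) * ‖b - a‖ ^ (p - 1) := by
  rcases le_total ‖a‖ ‖b‖ with h | h
  · exact key_aux hp1 hp2 a b h
  · rw [norm_sub_rev, norm_sub_rev b a]
    exact key_aux hp1 hp2 b a h

lemma add_rpow_le_two_rpow {p c d : ℝ} (hp : 0 ≤ p) (hc : 0 ≤ c) (hd : 0 ≤ d) :
    (c + d) ^ p ≤ 2 ^ p * (c ^ p + d ^ p) := by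
  have hm : c + d ≤ 2 * max c d := by
    rcases le_total c d with h | h
    · rw [max_eq_right h]; linarith
    · rw [max_eq_left h]; linarith
  calc (c + d) ^ p ≤ (2 * max c d) ^ p := Real.rpow_le_rpow (by linarith) hm hp
    _ = 2 ^ p * (max c d) ^ p := Real.mul_rpow (by norm_num) (le_max_iff.mpr (Or.inl hc))
    _ ≤ 2 ^ p * (c ^ p + d ^ p) := by
        apply mul_le_mul_of_nonneg_left _ (Real.rpow_nonneg (by norm_num) _)
        rcases le_total c d with h | h
        · rw [max_eq_right h]; have := Real.rpow_nonneg hc p; linarith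
        · rw [max_eq_left h]; have := Real.rpow_nonneg hd p; linarith

/-- Anisotropic flux deviation estimate for `1 < p ≤ 2`:
`‖ |g|^{p-2} M g - |f|^{p-2} M f ‖_{p'} ≤ Λ∞ ((3-p)/(p-1)) 2^{p-1} ‖g - f‖_p^{p-1}`. -/
theorem anisotropic_flux_deviation_p_le_two
    (p : ℝ) (hp1 : 1 < p) (hp2 : p ≤ 2)
    (N : ℕ) (hN : 1 ≤ N)
    {Ω : Type*} [MeasurableSpace Ω] (μ : Measure Ω)
    (Λ : ℝ) (hΛ : 0 ≤ Λ)
    (M : Ω → (EuclideanSpace ℝ (Fin N) →ₗ[ℝ] EuclideanSpace ℝ (Fin N)))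
    (hMmeas : ∀ ξ : EuclideanSpace ℝ (Fin N), Measurable fun x => M x ξ)
    (hMsymm : ∀ x : Ω, ∀ ξ η : EuclideanSpace ℝ (Fin N),
      (inner ℝ (M x ξ) η : ℝ) = inner ℝ ξ (M x η))
    (hMbound : ∀ᵐ x ∂μ, ∀ ξ : EuclideanSpace ℝ (Fin N), ‖M x ξ‖ ≤ Λ * ‖ξ‖)
    (f g : Ω → EuclideanSpace ℝ (Fin N))
    (hfm : Measurable f) (hgm : Measurable g)
    (hfp : ∫⁻ x, ENNReal.ofReal (‖f x‖ ^ p) ∂μ < ⊤)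
    (hgp : ∫⁻ x, ENNReal.ofReal (‖g x‖ ^ p) ∂μ < ⊤) :
    (∫ x, ‖‖g x‖ ^ (p - 2) • M x (g x) - ‖f x‖ ^ (p - 2) • M x (f x)‖ ^ (p / (p - 1)) ∂μ)
        ^ (1 / (p / (p - 1)))
      ≤ Λ * ((3 - p) / (p - 1)) * (2 : ℝ) ^ (p - 1)
          * ((∫ x, ‖g x - f x‖ ^ p ∂μ) ^ (1 / p)) ^ (p - 1) := by
  have hp1' : 0 < p - 1 := by linarith
  set q := p / (p - 1) with hq
  have hq0 : 0 < q := div_pos (by linarith) hp1'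
  set K := Λ * ((3 - p) / (p - 1) * 2 ^ (p - 1)) with hKdef
  have hK : 0 ≤ K := mul_nonneg hΛ (mul_nonneg (div_nonneg (by linarith) (by linarith))
    (Real.rpow_nonneg (by norm_num) _))
  have hfint : Integrable (fun x => ‖f x‖ ^ p) μ := by
    refine ⟨((Real.continuous_rpow_const (by linarith : (0:ℝ) ≤ p)).measurable.comp hfm.norm).aestronglyMeasurable, ?_⟩
    rw [hasFiniteIntegral_iff_ofReal (Filter.Eventually.of_forall fun x =>
      Real.rpow_nonneg (norm_nonneg _) _)]
    exact hfp
  have hgint : Integrable (fun x => ‖g x‖ ^ p) μ := by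
    refine ⟨((Real.continuous_rpow_const (by linarith : (0:ℝ) ≤ p)).measurable.comp hgm.norm).aestronglyMeasurable, ?_⟩
    rw [hasFiniteIntegral_iff_ofReal (Filter.Eventually.of_forall fun x =>
      Real.rpow_nonneg (norm_nonneg _) _)]
    exact hgp
  have hsub : Integrable (fun x => ‖g x - f x‖ ^ p) μ := by
    refine Integrable.mono' ((hfint.add hgint).const_mul ((2:ℝ) ^ p))
      (((Real.continuous_rpow_const (by linarith : (0:ℝ) ≤ p)).measurable.comp (hgm.sub hfm).norm).aestronglyMeasurable)
      (Filter.Eventually.of_forall fun x => ?_)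
    rw [Real.norm_eq_abs, abs_of_nonneg (Real.rpow_nonneg (norm_nonneg _) _)]
    calc ‖g x - f x‖ ^ p ≤ (‖f x‖ + ‖g x‖) ^ p := by
          apply Real.rpow_le_rpow (norm_nonneg _) _ (by linarith)
          rw [add_comm]
          exact norm_sub_le _ _
      _ ≤ 2 ^ p * (‖f x‖ ^ p + ‖g x‖ ^ p) :=
          add_rpow_le_two_rpow (by linarith) (norm_nonneg _) (norm_nonneg _)
  have hae : ∀ᵐ x ∂μ, ‖‖g x‖ ^ (p - 2) • M x (g x) - ‖f x‖ ^ (p - 2) • M x (f x)‖ ^ q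
      ≤ K ^ q * ‖g x - f x‖ ^ p := by
    filter_upwards [hMbound] with x hx
    have e1 : ‖g x‖ ^ (p - 2) • M x (g x) - ‖f x‖ ^ (p - 2) • M x (f x)
        = M x (‖g x‖ ^ (p - 2) • g x - ‖f x‖ ^ (p - 2) • f x) := by
      rw [map_sub, _root_.map_smul, _root_.map_smul]
    rw [e1]
    have e4 : ‖M x (‖g x‖ ^ (p - 2) • g x - ‖f x‖ ^ (p - 2) • f x)‖
        ≤ K * ‖g x - f x‖ ^ (p - 1) := by
      refine (hx _).trans ?_
      calc Λ * ‖‖g x‖ ^ (p - 2) • g x - ‖f x‖ ^ (p - 2) • f x‖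
          ≤ Λ * ((3 - p) / (p - 1) * 2 ^ (p - 1) * ‖g x - f x‖ ^ (p - 1)) :=
            mul_le_mul_of_nonneg_left (key_ineq hp1 hp2 (f x) (g x)) hΛ
        _ = K * ‖g x - f x‖ ^ (p - 1) := by rw [hKdef]; ring
    calc ‖M x (‖g x‖ ^ (p - 2) • g x - ‖f x‖ ^ (p - 2) • f x)‖ ^ q
        ≤ (K * ‖g x - f x‖ ^ (p - 1)) ^ q :=
          Real.rpow_le_rpow (norm_nonneg _) e4 hq0.le
      _ = K ^ q * (‖g x - f x‖ ^ (p - 1)) ^ q :=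
          Real.mul_rpow hK (Real.rpow_nonneg (norm_nonneg _) _)
      _ = K ^ q * ‖g x - f x‖ ^ p := by
          rw [← Real.rpow_mul (norm_nonneg _),
            show (p - 1) * q = p by rw [hq]; field_simp]
  have hmono : (∫ x, ‖‖g x‖ ^ (p - 2) • M x (g x) - ‖f x‖ ^ (p - 2) • M x (f x)‖ ^ q ∂μ)
      ≤ K ^ q * ∫ x, ‖g x - f x‖ ^ p ∂μ := by
    rw [← MeasureTheory.integral_const_mul]
    exact integral_mono_of_nonneg (Filter.Eventually.of_forall fun x =>
      Real.rpow_nonneg (norm_nonneg _) _) (hsub.const_mul _) hae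
  have hInn : 0 ≤ ∫ x, ‖g x - f x‖ ^ p ∂μ :=
    integral_nonneg fun x => Real.rpow_nonneg (norm_nonneg _) _
  have hLnn : 0 ≤ ∫ x, ‖‖g x‖ ^ (p - 2) • M x (g x) - ‖f x‖ ^ (p - 2) • M x (f x)‖ ^ q ∂μ :=
    integral_nonneg fun x => Real.rpow_nonneg (norm_nonneg _) _
  calc (∫ x, ‖‖g x‖ ^ (p - 2) • M x (g x) - ‖f x‖ ^ (p - 2) • M x (f x)‖ ^ q ∂μ) ^ (1/q)
      ≤ (K ^ q * ∫ x, ‖g x - f x‖ ^ p ∂μ) ^ (1/q) :=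
        Real.rpow_le_rpow hLnn hmono (by positivity)
    _ = K * (∫ x, ‖g x - f x‖ ^ p ∂μ) ^ (1/q) := by
        rw [Real.mul_rpow (Real.rpow_nonneg hK _) hInn, ← Real.rpow_mul hK,
          mul_one_div_cancel hq0.ne', Real.rpow_one]
    _ = Λ * ((3 - p) / (p - 1)) * (2 : ℝ) ^ (p - 1)
          * ((∫ x, ‖g x - f x‖ ^ p ∂μ) ^ (1 / p)) ^ (p - 1) := by
        rw [← Real.rpow_mul hInn,
          show 1 / p * (p - 1) = 1 / q by rw [hq, one_div_div]; ring, hKdef]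
        ring
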